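/- Let p be a prime and 0 < m < p/2. Then the normalized Apéry-like numbers Ã_2(n) = Σ_{k=0}^n (-1)^k C(-1/2,k)² C(n,k) (which lie in ℤ_p for p odd) satisfy Ã_2(m p^r) ≡ Ã_2(m p^{r-1}) (mod p^r ℤ_p) for all integers r ≥ 1. -/

import Mathlib

/-- Generalized binomial coefficient `C(a,k) = a(a-1)⋯(a-k+1)/k!` over `ℚ`. -/
def qbinom (a : ℚ) (k : ℕ) : ℚ :=
  (∏ i ∈ Finset.range k, (a - i)) / k.factorial

/-- Normalized Apéry-like numbers `Ã₂(n) = Σ_{k=0}^n (-1)^k C(-1/2,k)² C(n,k)`. -/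
def Atilde2 (n : ℕ) : ℚ :=
  ∑ k ∈ Finset.range (n + 1), (-1) ^ k * (qbinom (-(1 / 2)) k) ^ 2 * (n.choose k : ℚ)

namespace Stmt16Aux

open Polynomial

/- ### `qbinom` evaluation -/

lemma qbinom_half_prod (k : ℕ) :
    (∏ i ∈ Finset.range k, ((-(1/2) : ℚ) - i)) = (-1)^k * (2*k).factorial / (4^k * k.factorial) := by
  induction k with
  | zero => simp
  | succ k ih =>
    rw [Finset.prod_range_succ, ih]
    have h1 : ((2*(k+1)).factorial : ℚ) = (2*k+2) * (2*k+1) * (2*k).factorial := by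
      have h : 2*(k+1) = (2*k+1) + 1 := by ring
      rw [h, Nat.factorial_succ]
      have h' : (2*k+1 : ℕ) = (2*k) + 1 := rfl
      rw [h', Nat.factorial_succ]
      push_cast; ring
    have h3 : (k.factorial : ℚ) ≠ 0 := Nat.cast_ne_zero.mpr (Nat.factorial_ne_zero k)
    have h4 : (4:ℚ)^k ≠ 0 := by positivity
    have h2 : ((k+1).factorial : ℚ) = (k+1) * k.factorial := by
      rw [Nat.factorial_succ]; push_cast; ring
    rw [h1, h2]
    push_cast
    field_simp
    ring

lemma qbinom_half (k : ℕ) :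
    qbinom (-(1/2)) k = (-1)^k * ((2*k).choose k : ℚ) / 4^k := by
  rw [qbinom, qbinom_half_prod]
  rw [Nat.cast_choose ℚ (by omega : k ≤ 2*k)]
  have h : 2*k - k = k := by omega
  rw [h]
  have h3 : (k.factorial : ℚ) ≠ 0 := Nat.cast_ne_zero.mpr (Nat.factorial_ne_zero k)
  have h4 : (4:ℚ)^k ≠ 0 := by positivity
  field_simp

/- ### the integer sequence `bsum` -/

def bsum (n : ℕ) : ℤ :=
  ∑ k ∈ Finset.range (n + 1), (-1)^k * 16^(n-k) * (n.choose k : ℤ) * (((2*k).choose k : ℤ))^2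

lemma bsum_eq (n : ℕ) : (bsum n : ℚ) = 16^n * Atilde2 n := by
  rw [bsum, Atilde2, Finset.mul_sum]
  push_cast
  refine Finset.sum_congr rfl fun k hk => ?_
  have hkn : k ≤ n := by simpa [Nat.lt_succ_iff] using hk
  rw [qbinom_half]
  have h16 : (16:ℚ)^(n-k) = 16^n / 16^k := by
    rw [eq_div_iff (by positivity), ← pow_add]; congr 1; omega
  rw [h16]
  have hsq : ((-1:ℚ)^k * ((2*k).choose k : ℚ) / 4^k)^2 = (((2*k).choose k : ℚ))^2 / 16^k := by
    rw [div_pow, mul_pow, ← pow_mul, mul_comm k 2, pow_mul]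
    norm_num
    rw [← pow_mul, mul_comm k 2, pow_mul]
    norm_num
  rw [hsq]
  field_simp

/- ### polynomial setup -/

noncomputable def PA : Polynomial (Polynomial ℤ) := C (C 16 * X) * X
noncomputable def PB : Polynomial (Polynomial ℤ) := C ((X + 1)^2) * (X + 1)^2
noncomputable def PP : Polynomial (Polynomial ℤ) := PA - PB

noncomputable def ct (n : ℕ) (f : Polynomial (Polynomial ℤ)) : ℤ := (f.coeff n).coeff n

lemma ct_term (n k : ℕ) (hk : k ≤ n) :
    ct n (PA^k * PB^(n-k)) = 16^k * (((2*(n-k)).choose (n-k) : ℤ))^2 := by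
  set s := n - k with hs
  have hn : n = s + k := by omega
  have key : PA^k * PB^(n-k) = C ((C 16 * X)^k * (X+1)^(2*s)) * (X^k * (X+1)^(2*s)) := by
    rw [PA, PB, mul_pow, mul_pow, ← C_pow, ← C_pow, ← pow_mul, ← pow_mul]
    simp only [C_mul]
    ring
  unfold ct
  rw [key]
  rw [coeff_C_mul]
  have houter : ((X^k * (X+1)^(2*s)) : Polynomial (Polynomial ℤ)).coeff n
      = ((2*s).choose s : Polynomial ℤ) := by
    rw [hn, mul_comm (X^k), coeff_mul_X_pow, coeff_X_add_one_pow]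
  rw [houter]
  have hinner : ((C 16 * X)^k * (X+1)^(2*s) : Polynomial ℤ) = C (16^k) * (X^k * (X+1)^(2*s)) := by
    rw [mul_pow, ← C_pow]; ring
  rw [hinner, mul_comm (C ((16:ℤ)^k) * (X^k * (X+1)^(2*s)))]
  rw [coeff_natCast_mul]
  rw [coeff_C_mul, hn, mul_comm (X^k), coeff_mul_X_pow, coeff_X_add_one_pow]
  push_cast
  ring

lemma ct_sum {α : Type*} (n : ℕ) (s : Finset α) (f : α → Polynomial (Polynomial ℤ)) :
    ct n (∑ a ∈ s, f a) = ∑ a ∈ s, ct n (f a) := by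
  unfold ct; rw [finset_sum_coeff, finset_sum_coeff]

lemma ct_int_mul (n : ℕ) (z : ℤ) (f : Polynomial (Polynomial ℤ)) :
    ct n ((z : Polynomial (Polynomial ℤ)) * f) = z * ct n f := by
  have h1 : (z : Polynomial (Polynomial ℤ)) = C (C z) := by
    rw [← map_intCast (C : Polynomial ℤ →+* Polynomial (Polynomial ℤ)) z,
      ← map_intCast (C : ℤ →+* Polynomial ℤ) z]
    norm_cast
  unfold ct
  rw [h1, coeff_C_mul, coeff_C_mul]

lemma bseq_eq (n : ℕ) : ct n (PP ^ n) = bsum n := by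
  have hPP : PP = PA + (-PB) := by rw [PP]; ring
  rw [hPP, add_pow, ct_sum]
  have hterm : ∀ k ∈ Finset.range (n+1),
      ct n (PA^k * (-PB)^(n-k) * ((n.choose k : ℕ) : Polynomial (Polynomial ℤ)))
      = (-1)^(n-k) * (n.choose k : ℤ) * (16^k * (((2*(n-k)).choose (n-k) : ℤ))^2) := by
    intro k hk
    have hk' : k ≤ n := by simpa [Nat.lt_succ_iff] using hk
    have h1 : PA^k * (-PB)^(n-k) * ((n.choose k : ℕ) : Polynomial (Polynomial ℤ))
        = (((-1)^(n-k) * (n.choose k : ℤ) : ℤ) : Polynomial (Polynomial ℤ)) * (PA^k * PB^(n-k)) := by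
      push_cast
      rw [show (-PB) = (-1 : Polynomial (Polynomial ℤ)) * PB from by ring, mul_pow]
      ring
    rw [h1, ct_int_mul, ct_term n k hk']
  rw [Finset.sum_congr rfl hterm, bsum]
  rw [← Finset.sum_range_reflect]
  refine Finset.sum_congr rfl fun j hj => ?_
  have hj' : j ≤ n := by simpa [Nat.lt_succ_iff] using hj
  have h2 : n + 1 - 1 - j = n - j := by omega
  have h3 : n - (n - j) = j := by omega
  rw [h2, h3, Nat.choose_symm hj']
  ring

/- ### Frobenius -/

noncomputable def EE (q : ℕ) : Polynomial (Polynomial ℤ) →+* Polynomial (Polynomial ℤ) :=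
  (Polynomial.expand (Polynomial ℤ) q).toRingHom.comp
    (Polynomial.mapRingHom (Polynomial.expand ℤ q).toRingHom)

lemma ct_EE (q n : ℕ) (hq : 0 < q) (f : Polynomial (Polynomial ℤ)) :
    ct (q * n) (EE q f) = ct n f := by
  show (((Polynomial.expand (Polynomial ℤ) q)
    (f.map (Polynomial.expand ℤ q).toRingHom)).coeff (q*n)).coeff (q*n) = _
  rw [coeff_expand_mul' hq, coeff_map]
  show ((Polynomial.expand ℤ q) (f.coeff n)).coeff (q*n) = _
  rw [coeff_expand_mul' hq]
  rfl

variable (p : ℕ) [Fact p.Prime]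

lemma frobenius_eq_expand :
    frobenius (Polynomial (ZMod p)) p = (Polynomial.expand (ZMod p) p).toRingHom := by
  apply Polynomial.ringHom_ext
  · intro c
    rw [frobenius_def, ← C_pow, ZMod.pow_card]
    simp
  · rw [frobenius_def]
    simp [Polynomial.expand_X]

lemma pow_p_eq (g : Polynomial (Polynomial (ZMod p))) :
    g ^ p = (Polynomial.expand (Polynomial (ZMod p)) p)
      (g.map (Polynomial.expand (ZMod p) p).toRingHom) := by
  rw [← Polynomial.map_frobenius_expand p g, frobenius_eq_expand]
  rw [Polynomial.map_expand]

lemma frob_decomp (f : Polynomial (Polynomial ℤ)) :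
    ∃ Q, f ^ p = EE p f + C (C (p:ℤ)) * Q := by
  have hdvd : C (C (p:ℤ)) ∣ f ^ p - EE p f := by
    rw [C_dvd_iff_dvd_coeff]
    intro i
    rw [C_dvd_iff_dvd_coeff]
    intro j
    rw [← ZMod.intCast_zmod_eq_zero_iff_dvd]
    set φ : ℤ →+* ZMod p := Int.castRingHom (ZMod p)
    have key : ((f ^ p - EE p f).map (mapRingHom φ)) = 0 := by
      rw [Polynomial.map_sub, Polynomial.map_pow]
      rw [sub_eq_zero]
      rw [pow_p_eq]
      symm
      show map (mapRingHom φ) ((Polynomial.expand (Polynomial ℤ) p)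
        (map (Polynomial.expand ℤ p).toRingHom f)) = _
      rw [Polynomial.map_expand, Polynomial.map_map, Polynomial.map_map]
      congr 2
      apply RingHom.ext
      intro a
      show map φ ((Polynomial.expand ℤ p) a) = (Polynomial.expand (ZMod p) p) (map φ a)
      exact Polynomial.map_expand
    have h2 := congrArg (fun g => (g.coeff i).coeff j) key
    simpa only [Polynomial.coeff_map, Polynomial.coe_mapRingHom, Polynomial.coeff_zero, eq_intCast] using h2
  obtain ⟨Q, hQ⟩ := hdvd
  exact ⟨Q, by rw [← hQ]; ring⟩

/- ### valuation lemma -/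

lemma val_aux (hp : p.Prime) (r M i : ℕ) (hM0 : 0 < M) (hM : p^(r-1) ∣ M)
    (hi : 1 ≤ i) : p ^ r ∣ p ^ i * M.choose i := by
  set s := i.factorization p with hs
  have hps : p ^ s ∣ i := Nat.ordProj_dvd i p
  have hsi : s + 1 ≤ i := by
    have h1 : p ^ s ≤ i := Nat.le_of_dvd hi hps
    have h2 : s < p ^ s := Nat.lt_pow_self (n := s) hp.one_lt
    omega
  by_cases hcase : r - 1 ≤ s
  · exact Dvd.dvd.mul_right (pow_dvd_pow p (by omega)) _
  · push_neg at hcase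
    have hid : p ^ (r-1) ∣ i * M.choose i := by
      refine hM.trans ?_
      have h7 := Nat.add_one_mul_choose_eq (M-1) (i-1)
      have hM1 : M-1+1 = M := by omega
      have hi1 : i-1+1 = i := by omega
      rw [hM1, hi1] at h7
      exact ⟨(M-1).choose (i-1), by rw [h7]; ring⟩
    set u := i / p ^ s with hu
    have hiu : i = p ^ s * u := (Nat.ordProj_mul_ordCompl_eq_self i p).symm
    have hpu : ¬ p ∣ u := Nat.not_dvd_ordCompl hp (by omega)
    have h3 : p ^ s * p ^ (r-1-s) ∣ p ^ s * (u * M.choose i) := by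
      rw [← pow_add]
      have h : s + (r-1-s) = r - 1 := by omega
      rw [h]
      calc p ^ (r-1) ∣ i * M.choose i := hid
        _ = p ^ s * (u * M.choose i) := by rw [hiu]; ring
    have h4 : p ^ (r-1-s) ∣ u * M.choose i :=
      (mul_dvd_mul_iff_left (pow_ne_zero s hp.pos.ne')).mp h3
    have h5 : Nat.Coprime (p ^ (r-1-s)) u :=
      Nat.Coprime.pow_left _ ((Nat.Prime.coprime_iff_not_dvd hp).mpr hpu)
    have h6 : p ^ (r-1-s) ∣ M.choose i := (Nat.Coprime.dvd_of_dvd_mul_left h5) h4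
    calc p ^ r ∣ p ^ i * p ^ (r-1-s) := by
          rw [← pow_add]; exact pow_dvd_pow p (by omega)
      _ ∣ p ^ i * M.choose i := mul_dvd_mul_left _ h6

/- ### Gauss congruence -/

lemma gauss (r M : ℕ) (hr : 1 ≤ r) (hM0 : 0 < M) (hM : (p:ℕ)^(r-1) ∣ M) :
    (p:ℤ)^r ∣ bsum (p * M) - bsum M := by
  have hp : p.Prime := Fact.out
  obtain ⟨Q, hQ⟩ := frob_decomp p PP
  have hexp : PP ^ (p * M) = ∑ k ∈ Finset.range (M + 1),
      (C (C (p:ℤ)) * Q) ^ k * (EE p PP) ^ (M - k) * ((M.choose k : ℕ) : Polynomial (Polynomial ℤ)) := by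
    rw [pow_mul, hQ, add_comm, add_pow]
  have hct : ∀ k, ct (p*M) ((C (C (p:ℤ)) * Q) ^ k * (EE p PP) ^ (M - k)
      * ((M.choose k : ℕ) : Polynomial (Polynomial ℤ)))
      = (p:ℤ)^k * (M.choose k : ℤ) * ct (p*M) (Q ^ k * (EE p PP) ^ (M - k)) := by
    intro k
    have h1 : (C (C (p:ℤ)) * Q) ^ k * (EE p PP) ^ (M - k) * ((M.choose k : ℕ) : Polynomial (Polynomial ℤ))
        = (((p:ℤ)^k * (M.choose k : ℤ) : ℤ) : Polynomial (Polynomial ℤ))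
          * (Q ^ k * (EE p PP) ^ (M - k)) := by
      push_cast
      have hC : (C (C ((p:ℤ))) : Polynomial (Polynomial ℤ)) = ((p:ℤ) : Polynomial (Polynomial ℤ)) := by
        norm_cast
      rw [mul_pow, hC]
      push_cast
      ring
    rw [h1, ct_int_mul]
  have hmain : ct (p*M) (PP ^ (p*M)) - ct M (PP ^ M)
      = ∑ k ∈ Finset.range M, ((p:ℤ)^(k+1) * (M.choose (k+1) : ℤ)
          * ct (p*M) (Q ^ (k+1) * (EE p PP) ^ (M - (k+1)))) := by
    rw [hexp, ct_sum, Finset.sum_range_succ']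
    simp only [hct]
    have h0 : (p:ℤ)^0 * (M.choose 0 : ℤ) * ct (p*M) (Q ^ 0 * (EE p PP) ^ (M - 0)) = ct M (PP ^ M) := by
      simp only [pow_zero, Nat.choose_zero_right, Nat.cast_one, one_mul, Nat.sub_zero]
      rw [← map_pow (EE p) PP M, ct_EE p M hp.pos]
    rw [h0]
    ring
  rw [← bseq_eq, ← bseq_eq, hmain]
  refine Finset.dvd_sum fun k _ => ?_
  have hdv : (p:ℤ)^r ∣ (p:ℤ)^(k+1) * (M.choose (k+1) : ℤ) := by
    have := val_aux p hp r M (k+1) hM0 hM (by omega)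
    exact_mod_cast Int.natCast_dvd_natCast.mpr this
  exact hdv.mul_right _

end Stmt16Aux

/-- For a prime `p` and `0 < m < p/2`, the congruence
`Ã₂(m p^r) ≡ Ã₂(m p^{r-1}) (mod p^r ℤ_p)` holds for all `r ≥ 1`; stated via the
`p`-adic norm: `‖Ã₂(m p^r) - Ã₂(m p^{r-1})‖_p ≤ p^{-r}`. -/
theorem stmt_16 (p : ℕ) [Fact p.Prime] (m : ℕ) (hm : 0 < m) (hmp : 2 * m < p)
    (r : ℕ) (hr : 1 ≤ r) :
    ‖((Atilde2 (m * p ^ r) : ℚ_[p])) - ((Atilde2 (m * p ^ (r - 1)) : ℚ_[p]))‖ ≤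
      (p : ℝ) ^ (-(r : ℤ)) := by
  have hp : p.Prime := Fact.out
  have hp3 : 3 ≤ p := by
    rcases Nat.Prime.eq_two_or_odd hp with h | h
    · omega
    · have := hp.two_le; omega
  set N := m * p ^ r with hN
  set M := m * p ^ (r - 1) with hM
  have hNM : N = p * M := by
    rw [hN, hM, ← mul_assoc, mul_comm p m, mul_assoc, ← pow_succ']
    congr 2
    omega
  have hM0 : 0 < M := by positivity
  have hMN : M ≤ N := by
    rw [hNM]; nlinarith
  -- coprimality
  have hpdvd : ¬ p ∣ 16 := by
    intro h
    have h2 : p ∣ 2 := hp.dvd_of_dvd_pow (show p ∣ 2^4 by norm_num; exact h)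
    have := Nat.le_of_dvd (by norm_num) h2
    omega
  have hcop : Nat.Coprime 16 (p ^ r) :=
    Nat.Coprime.pow_right r (((hp.coprime_iff_not_dvd).mpr hpdvd).symm)
  -- 16^(N-M) ≡ 1 mod p^r
  have h16 : (16:ℕ) ^ (N - M) ≡ 1 [MOD p ^ r] := by
    have htot : (p^r).totient = p^(r-1) * (p-1) := Nat.totient_prime_pow hp (by omega)
    have hNMsub : N - M = ((p^r).totient) * m := by
      have hstep : m * p * p^(r-1) = m * p^(r-1) * (p-1) + m * p^(r-1) := by
        have h1 : p - 1 + 1 = p := by omega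
        nth_rewrite 1 [← h1]
        ring
      have hNe : N = m * p * p ^ (r-1) := by
        rw [hN]
        have : p ^ r = p * p ^ (r-1) := by rw [← pow_succ']; congr 1; omega
        rw [this]; ring
      rw [hNe, hM, htot]
      rw [Nat.sub_eq_of_eq_add hstep]
      ring
    rw [hNMsub, pow_mul]
    calc (16^(p^r).totient)^m ≡ 1^m [MOD p^r] := Nat.ModEq.pow m (Nat.ModEq.pow_totient hcop)
      _ = 1 := one_pow m
  have h16' : (p:ℤ)^r ∣ 1 - (16:ℤ)^(N - M) := by
    have := h16.dvd
    push_cast at this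
    exact_mod_cast this
  -- the key integer divisibility
  set D : ℤ := Stmt16Aux.bsum N - 16^(N-M) * Stmt16Aux.bsum M with hD
  have hDdvd : (p:ℤ)^r ∣ D := by
    have hg : (p:ℤ)^r ∣ Stmt16Aux.bsum N - Stmt16Aux.bsum M := by
      rw [hNM]
      exact Stmt16Aux.gauss p r M hr hM0 (by rw [hM]; exact dvd_mul_left _ _)
    have : D = (Stmt16Aux.bsum N - Stmt16Aux.bsum M) + (1 - 16^(N-M)) * Stmt16Aux.bsum M := by rw [hD]; ring
    rw [this]
    exact dvd_add hg (h16'.mul_right _)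
  -- the rational identity
  have hsplit : (16:ℚ)^N = 16^(N-M) * 16^M := by rw [← pow_add]; congr 1; omega
  have hDQ : (D:ℚ) = 16^N * Atilde2 N - 16^N * Atilde2 M := by
    rw [hD]
    push_cast
    rw [Stmt16Aux.bsum_eq, Stmt16Aux.bsum_eq, hsplit]
    ring
  have h16N : (16:ℚ)^N ≠ 0 := by positivity
  have key : Atilde2 N - Atilde2 M = (D:ℚ) / 16^N := by
    rw [hDQ]
    field_simp
  -- move to ℚ_p
  have hcast : ((Atilde2 N : ℚ_[p])) - ((Atilde2 M : ℚ_[p]))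
      = ((D : ℤ) : ℚ_[p]) * ((16:ℚ_[p])^N)⁻¹ := by
    have h := congrArg (fun q : ℚ => (q : ℚ_[p])) key
    simp only [Rat.cast_sub, Rat.cast_div, Rat.cast_intCast, Rat.cast_pow, Rat.cast_ofNat] at h
    rw [h, div_eq_mul_inv]
  have h161 : ‖(16:ℚ_[p])‖ = 1 := by
    have hle : ‖((16:ℤ):ℚ_[p])‖ ≤ 1 := Padic.norm_int_le_one 16
    have hnlt : ¬ ‖((16:ℤ):ℚ_[p])‖ < 1 := by
      rw [Padic.norm_intCast_lt_one_iff]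
      exact_mod_cast hpdvd
    have : ‖((16:ℤ):ℚ_[p])‖ = 1 := le_antisymm hle (not_lt.mp hnlt)
    exact_mod_cast this
  rw [hcast]
  rw [norm_mul, norm_inv, norm_pow, h161]
  simp only [one_pow, inv_one, mul_one]
  exact (Padic.norm_int_le_pow_iff_dvd D r).mpr (by exact_mod_cast hDdvd)
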